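/- Let d ≥ 1, let T : ℝ^d → [0,∞) be measurable, let ω ∈ ℝ^d be such that ∫_{B_δ(ω)} T(η)^{-1} dη = ∞ for every δ > 0, and let V ∈ L¹(ℝ^d; ℝ) satisfy ∫_{ℝ^d} V(x) dx < 0. Then there exists a measurable function ψ : ℝ^d → [0,∞) with ψ ∈ L¹(ℝ^d) ∩ L²(ℝ^d) and ψ not identically zero such that, with φ(x) := (2π)^{−d/2} ∫_{ℝ^d} e^{i x·η} ψ(η) dη, one has ∫_{ℝ^d} T(η) ψ(η)² dη + ∫_{ℝ^d} V(x) |φ(x)|² dx < 0. (This is the variational core of the existence of weakly coupled bound states for T(p) + V.) -/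

import Mathlib

open MeasureTheory

lemma aux_tail {E : Type*} [NormedAddCommGroup E] [MeasurableSpace E] [OpensMeasurableSpace E]
    {μ : Measure E} (f : E → ℝ) (hf : Integrable f μ) {ε : ℝ} (hε : 0 < ε) :
    ∃ R : ℝ, 1 ≤ R ∧ ∫ x in (Metric.ball (0:E) R)ᶜ, |f x| ∂μ ≤ ε := by
  have habs := hf.abs
  have hmono : Monotone (fun n : ℕ => Metric.ball (0:E) n) := fun m n h =>
    Metric.ball_subset_ball (by exact_mod_cast h)
  have hunion : ⋃ n : ℕ, Metric.ball (0:E) n = Set.univ := by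
    ext x
    simp only [Set.mem_iUnion, Metric.mem_ball, Set.mem_univ, iff_true]
    exact exists_nat_gt (dist x 0)
  have htend := tendsto_setIntegral_of_monotone (fun n : ℕ => measurableSet_ball) hmono
    (by rw [hunion]; exact habs.integrableOn)
  rw [hunion, setIntegral_univ] at htend
  have htend2 : Filter.Tendsto (fun n : ℕ => (∫ x, |f x| ∂μ) - ∫ x in Metric.ball (0:E) n, |f x| ∂μ)
      Filter.atTop (nhds 0) := by
    simpa using (tendsto_const_nhds (x := ∫ x, |f x| ∂μ)).sub htend
  obtain ⟨n, hn⟩ := (htend2.eventually (eventually_le_nhds hε)).exists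
  refine ⟨max n 1, le_max_right _ _, ?_⟩
  have hcompl : ∫ x in (Metric.ball (0:E) n)ᶜ, |f x| ∂μ
      = (∫ x, |f x| ∂μ) - ∫ x in Metric.ball (0:E) n, |f x| ∂μ := by
    have := integral_add_compl (measurableSet_ball (x := (0:E)) (ε := (n:ℝ))) habs
    linarith
  refine le_trans (setIntegral_mono_set habs.integrableOn ?_ ?_) (hcompl ▸ hn)
  · exact Filter.Eventually.of_forall fun x => abs_nonneg _
  · exact HasSubset.Subset.eventuallyLE (Set.compl_subset_compl.mpr
      (Metric.ball_subset_ball (le_max_left _ _)))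

lemma aux_pick {α : Type*} [MeasurableSpace α] {μ : Measure α} {T : α → ℝ}
    (hT : Measurable T) (hT0 : ∀ η, 0 ≤ T η)
    (htop : ∫⁻ η, (ENNReal.ofReal (T η))⁻¹ ∂μ = ⊤) (K : ℝ) :
    ∃ c : ℝ, 0 < c ∧ ENNReal.ofReal K < ∫⁻ η, ENNReal.ofReal ((T η + c)⁻¹) ∂μ := by
  set f : ℕ → α → ENNReal := fun n η => ENNReal.ofReal ((T η + ((n:ℝ)+1)⁻¹)⁻¹) with hf
  have hmeas : ∀ n : ℕ, AEMeasurable (f n) μ := fun n =>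
    (ENNReal.measurable_ofReal.comp ((hT.add measurable_const).inv)).aemeasurable
  have hmono : ∀ η, Monotone fun n => f n η := by
    intro η m n hmn
    apply ENNReal.ofReal_le_ofReal
    have h1 : (0:ℝ) < T η + ((n:ℝ)+1)⁻¹ := add_pos_of_nonneg_of_pos (hT0 η) (by positivity)
    apply inv_anti₀ h1
    have : ((n:ℝ)+1)⁻¹ ≤ ((m:ℝ)+1)⁻¹ := by
      apply inv_anti₀ (by positivity)
      exact_mod_cast Nat.succ_le_succ hmn
    linarith
  have htendpt : ∀ η, Filter.Tendsto (fun n => f n η) Filter.atTop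
      (nhds ((ENNReal.ofReal (T η))⁻¹)) := by
    intro η
    rcases (hT0 η).eq_or_lt with h0 | hpos
    · have hfn : ∀ n : ℕ, f n η = ENNReal.ofReal ((n:ℝ)+1) := by
        intro n; simp [hf, ← h0, inv_inv]
      simp only [← h0, ENNReal.ofReal_zero, ENNReal.inv_zero]
      rw [funext hfn]
      exact ENNReal.tendsto_ofReal_atTop.comp
        (Filter.tendsto_atTop_add_const_right _ 1 tendsto_natCast_atTop_atTop)
    · have hreal : Filter.Tendsto (fun n : ℕ => (T η + ((n:ℝ)+1)⁻¹)⁻¹) Filter.atTop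
          (nhds ((T η)⁻¹)) := by
        have h1 : Filter.Tendsto (fun n : ℕ => ((n:ℝ)+1)⁻¹) Filter.atTop (nhds 0) := by
          simpa [one_div] using tendsto_one_div_add_atTop_nhds_zero_nat (𝕜 := ℝ)
        have h2 : Filter.Tendsto (fun n : ℕ => T η + ((n:ℝ)+1)⁻¹) Filter.atTop (nhds (T η)) := by
          simpa using (tendsto_const_nhds (x := T η) (f := Filter.atTop (α := ℕ))).add h1
        exact h2.inv₀ (ne_of_gt hpos)
      rw [← ENNReal.ofReal_inv_of_pos hpos]
      exact ENNReal.tendsto_ofReal hreal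
  have htend := lintegral_tendsto_of_tendsto_of_monotone hmeas
    (Filter.Eventually.of_forall hmono) (Filter.Eventually.of_forall htendpt)
  rw [htop] at htend
  have hmem : Set.Ioi (ENNReal.ofReal K) ∈ nhds (⊤ : ENNReal) :=
    Ioi_mem_nhds ENNReal.ofReal_lt_top
  obtain ⟨n, hn⟩ := (htend.eventually_mem hmem).exists
  exact ⟨((n:ℝ)+1)⁻¹, by positivity, hn⟩

set_option maxHeartbeats 1000000 in
theorem weakly_coupled_bound_state_variational_core
    (d : ℕ) (hd : 1 ≤ d)
    (T : EuclideanSpace ℝ (Fin d) → ℝ)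
    (hT : Measurable T) (hT0 : ∀ η, 0 ≤ T η)
    (ω : EuclideanSpace ℝ (Fin d))
    (hthick : ∀ δ : ℝ, 0 < δ →
      ∫⁻ η in Metric.ball ω δ, (ENNReal.ofReal (T η))⁻¹ = ⊤)
    (V : EuclideanSpace ℝ (Fin d) → ℝ)
    (hV : Integrable V) (hVneg : ∫ x, V x < 0) :
    ∃ ψ : EuclideanSpace ℝ (Fin d) → ℝ,
      Measurable ψ ∧ (∀ η, 0 ≤ ψ η) ∧
      Integrable ψ ∧ Integrable (fun η => ψ η ^ 2) ∧
      ψ ≠ 0 ∧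
      Integrable (fun η => T η * ψ η ^ 2) ∧
      Integrable (fun x => V x *
        ‖(((2 * Real.pi) ^ (-(d : ℝ) / 2) : ℝ) : ℂ) *
            ∫ η, Complex.exp (Complex.I * ((inner ℝ x η : ℝ) : ℂ)) * (ψ η : ℂ)‖ ^ 2) ∧
      (∫ η, T η * ψ η ^ 2) +
        (∫ x, V x *
          ‖(((2 * Real.pi) ^ (-(d : ℝ) / 2) : ℝ) : ℂ) *
              ∫ η, Complex.exp (Complex.I * ((inner ℝ x η : ℝ) : ℂ)) * (ψ η : ℂ)‖ ^ 2) < 0 := by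
  classical
  set I : ℝ := -∫ x, V x with hIdef
  have hI : 0 < I := by simp only [hIdef]; linarith
  -- tail radius
  obtain ⟨R, hR1, hRtail⟩ := aux_tail V hV (show (0:ℝ) < I/4 by positivity)
  have hR0 : 0 < R := lt_of_lt_of_le one_pos hR1
  -- norms of V
  set nV : ℝ := ∫ x, |V x| with hnVdef
  have hnV0 : 0 ≤ nV := integral_nonneg fun x => abs_nonneg _
  -- small parameter a and δ
  set a : ℝ := min 1 (I/(4*(nV+1))) with hadef
  have ha0 : 0 < a := lt_min one_pos (by positivity)
  have ha1 : a ≤ 1 := min_le_left _ _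
  have haV : a * nV ≤ I/4 := by
    have h2 : a ≤ I/(4*(nV+1)) := min_le_right _ _
    have h3 : a * nV ≤ (I/(4*(nV+1))) * nV := mul_le_mul_of_nonneg_right h2 hnV0
    have h4 : (I/(4*(nV+1))) * nV ≤ I/4 := by
      rw [div_mul_eq_mul_div, div_le_div_iff₀ (by positivity) (by positivity)]
      nlinarith
    linarith
  set δ : ℝ := Real.sqrt a / R with hδdef
  have hδ0 : 0 < δ := by positivity
  have hRδ : R * δ = Real.sqrt a := by rw [hδdef]; field_simp
  -- the constant C
  set C : ℝ := (2 * Real.pi) ^ (-(d : ℝ) / 2) with hCdef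
  have hC0 : 0 < C := Real.rpow_pos_of_pos (by positivity) _
  set K : ℝ := 1 + 4/(C^2*I) with hKdef
  -- choose regularization c
  obtain ⟨c, hc0, hcK⟩ := aux_pick hT hT0 (hthick δ hδ0) K
  set g : EuclideanSpace ℝ (Fin d) → ℝ := fun η => (T η + c)⁻¹ with hgdef
  set ψ : EuclideanSpace ℝ (Fin d) → ℝ := (Metric.ball ω δ).indicator g with hψdef
  have hgmeas : Measurable g := (hT.add measurable_const).inv
  have hψmeas : Measurable ψ := hgmeas.indicator measurableSet_ball
  have hg0 : ∀ η, 0 ≤ g η := fun η =>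
    inv_nonneg.2 (le_of_lt (add_pos_of_nonneg_of_pos (hT0 η) hc0))
  have hgle : ∀ η, g η ≤ c⁻¹ := fun η =>
    inv_anti₀ hc0 (le_add_of_nonneg_left (hT0 η))
  have hψ0 : ∀ η, 0 ≤ ψ η := fun η => Set.indicator_nonneg (fun η _ => hg0 η) η
  have hψle : ∀ η, ψ η ≤ c⁻¹ := fun η => by
    by_cases h : η ∈ Metric.ball ω δ
    · simp only [hψdef, Set.indicator_of_mem h]; exact hgle η
    · simp only [hψdef, Set.indicator_of_notMem h]; positivity
  have hballfin : volume (Metric.ball ω δ) ≠ ⊤ := measure_ball_lt_top.ne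
  have hψint : Integrable ψ := by
    rw [hψdef, integrable_indicator_iff measurableSet_ball]
    exact Measure.integrableOn_of_bounded hballfin hgmeas.aestronglyMeasurable
      (Filter.Eventually.of_forall fun η => by
        rw [Real.norm_eq_abs, abs_of_nonneg (hg0 η)]; exact hgle η)
  have hψsqint : Integrable (fun η => ψ η ^ 2) := by
    have : (fun η => ψ η ^ 2) = (Metric.ball ω δ).indicator (fun η => g η ^ 2) := by
      funext η
      by_cases h : η ∈ Metric.ball ω δ <;>
        simp [hψdef, Set.indicator_of_mem, Set.indicator_of_notMem, h]
    rw [this, integrable_indicator_iff measurableSet_ball]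
    exact Measure.integrableOn_of_bounded hballfin (hgmeas.pow_const 2).aestronglyMeasurable
      (Filter.Eventually.of_forall fun η => by
        rw [Real.norm_eq_abs, abs_of_nonneg (sq_nonneg _)]
        exact pow_le_pow_left₀ (hg0 η) (hgle η) 2)
  -- mass M
  set M : ℝ := ∫ η, ψ η with hMdef
  have hlint_eq : ∫⁻ η, ENNReal.ofReal (ψ η) = ∫⁻ η in Metric.ball ω δ, ENNReal.ofReal (g η) := by
    have : (fun η => ENNReal.ofReal (ψ η))
        = (Metric.ball ω δ).indicator (fun η => ENNReal.ofReal (g η)) := by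
      funext η
      by_cases h : η ∈ Metric.ball ω δ <;>
        simp [hψdef, Set.indicator_of_mem, Set.indicator_of_notMem, h]
    rw [this, lintegral_indicator measurableSet_ball]
  have hMtoReal : M = (∫⁻ η, ENNReal.ofReal (ψ η)).toReal :=
    integral_eq_lintegral_of_nonneg_ae (Filter.Eventually.of_forall hψ0)
      hψmeas.aestronglyMeasurable
  have hKM : K ≤ M := by
    rw [hMtoReal]
    refine (ENNReal.ofReal_le_iff_le_toReal hψint.lintegral_lt_top.ne).1 ?_
    rw [hlint_eq]
    exact hcK.le
  have hK1 : (1:ℝ) ≤ K := le_add_of_nonneg_right (by positivity)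
  have hM1 : 1 ≤ M := le_trans hK1 hKM
  have hM0 : 0 < M := lt_of_lt_of_le one_pos hM1
  -- kinetic bound
  have hTψ : ∀ η, T η * ψ η ^ 2 ≤ ψ η := by
    intro η
    by_cases h : η ∈ Metric.ball ω δ
    · simp only [hψdef, Set.indicator_of_mem h]
      have hpos : 0 < T η + c := add_pos_of_nonneg_of_pos (hT0 η) hc0
      show T η * g η ^ 2 ≤ g η
      rw [hgdef]
      calc T η * ((T η + c)⁻¹)^2 ≤ (T η + c) * ((T η + c)⁻¹)^2 :=
            mul_le_mul_of_nonneg_right (by linarith) (sq_nonneg _)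
        _ = (T η + c)⁻¹ := by
            rw [sq, ← mul_assoc, mul_inv_cancel₀ hpos.ne', one_mul]
    · simp [hψdef, Set.indicator_of_notMem h]
  have hTψ0 : ∀ η, 0 ≤ T η * ψ η ^ 2 := fun η => mul_nonneg (hT0 η) (sq_nonneg _)
  have hTψint : Integrable (fun η => T η * ψ η ^ 2) := by
    refine Integrable.mono' hψint ((hT.mul (hψmeas.pow_const 2)).aestronglyMeasurable) ?_
    exact Filter.Eventually.of_forall fun η => by
      rw [Real.norm_eq_abs, abs_of_nonneg (hTψ0 η)]; exact hTψ η
  have hTψle : ∫ η, T η * ψ η ^ 2 ≤ M :=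
    integral_mono hTψint hψint hTψ
  -- Fourier transform
  set F : EuclideanSpace ℝ (Fin d) → EuclideanSpace ℝ (Fin d) → ℂ :=
    fun x η => Complex.exp (Complex.I * ((inner ℝ x η : ℝ) : ℂ)) * (ψ η : ℂ) with hFdef
  have hnormexp : ∀ t : ℝ, ‖Complex.exp (Complex.I * (t : ℂ))‖ = 1 := by
    intro t
    rw [Complex.norm_exp]
    simp [Complex.mul_re]
  have hnormF : ∀ x η, ‖F x η‖ = ψ η := by
    intro x η
    rw [hFdef]
    simp only [norm_mul, hnormexp, one_mul, Complex.norm_real, Real.norm_eq_abs,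
      abs_of_nonneg (hψ0 η)]
  have hFmeas : ∀ x, AEStronglyMeasurable (F x) volume := by
    intro x
    apply Measurable.aestronglyMeasurable
    exact (Complex.measurable_exp.comp
      ((Complex.measurable_ofReal.comp
        (continuous_const.inner continuous_id).measurable).const_mul Complex.I)).mul
      (Complex.measurable_ofReal.comp hψmeas)
  have hFint : ∀ x, Integrable (F x) := fun x =>
    Integrable.mono' hψint (hFmeas x) (Filter.Eventually.of_forall fun η => (hnormF x η).le)
  set Φ : EuclideanSpace ℝ (Fin d) → ℂ := fun x => ∫ η, F x η with hΦdef
  have hΦcont : Continuous Φ := by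
    refine continuous_of_dominated hFmeas
      (fun x => Filter.Eventually.of_forall fun η => (hnormF x η).le) hψint
      (Filter.Eventually.of_forall fun η => ?_)
    exact (Complex.continuous_exp.comp
      ((Complex.continuous_ofReal.comp (continuous_id.inner continuous_const)).const_smul
        Complex.I)).mul continuous_const
  have hΦle : ∀ x, ‖Φ x‖ ≤ M := by
    intro x
    calc ‖Φ x‖ ≤ ∫ η, ‖F x η‖ := norm_integral_le_integral_norm _
      _ = M := by rw [hMdef]; exact integral_congr_ae (Filter.Eventually.of_forall (hnormF x))
  have hΦlow : ∀ x : EuclideanSpace ℝ (Fin d), ‖x‖ ≤ R → (1 - a/2) * M ≤ ‖Φ x‖ := by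
    intro x hx
    set θ : ℝ := inner ℝ x ω with hθdef
    set u : ℂ := Complex.exp (Complex.I * ((-θ : ℝ) : ℂ)) with hudef
    have hu : ‖u‖ = 1 := hnormexp _
    have hGint : Integrable (fun η => u * F x η) := (hFint x).const_mul u
    have hre : ∀ η, (u * F x η).re = Real.cos ((inner ℝ x η : ℝ) - θ) * ψ η := by
      intro η
      have h1 : u * F x η
          = Complex.exp ((((inner ℝ x η : ℝ) - θ : ℝ) : ℂ) * Complex.I) * (ψ η : ℂ) := by
        rw [hudef, hFdef]
        have harg : Complex.I * ((-θ : ℝ) : ℂ) + Complex.I * ((inner ℝ x η : ℝ) : ℂ)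
            = (((inner ℝ x η : ℝ) - θ : ℝ) : ℂ) * Complex.I := by push_cast; ring
        rw [← mul_assoc, ← Complex.exp_add, harg]
      rw [h1, Complex.mul_re]
      simp only [Complex.exp_ofReal_mul_I_re, Complex.ofReal_re, Complex.ofReal_im,
        mul_zero, sub_zero]
    have hcosge : ∀ η, (1 - a/2) * ψ η ≤ Real.cos ((inner ℝ x η : ℝ) - θ) * ψ η := by
      intro η
      by_cases h : η ∈ Metric.ball ω δ
      · have ht : (inner ℝ x η : ℝ) - θ = inner ℝ x (η - ω) := by
          rw [hθdef, inner_sub_right]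
        have htle : |(inner ℝ x η : ℝ) - θ| ≤ Real.sqrt a := by
          rw [ht]
          calc |(inner ℝ x (η - ω) : ℝ)| ≤ ‖x‖ * ‖η - ω‖ := abs_real_inner_le_norm _ _
            _ ≤ R * δ := by
                apply mul_le_mul hx _ (norm_nonneg _) hR0.le
                rw [← dist_eq_norm]
                exact (Metric.mem_ball.1 h).le
            _ = Real.sqrt a := hRδ
        have ht2 : ((inner ℝ x η : ℝ) - θ)^2 ≤ a := by
          have h1 : ((inner ℝ x η : ℝ) - θ)^2 = |(inner ℝ x η : ℝ) - θ|^2 := (sq_abs _).symm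
          rw [h1]
          calc |(inner ℝ x η : ℝ) - θ|^2 ≤ (Real.sqrt a)^2 :=
                pow_le_pow_left₀ (abs_nonneg _) htle 2
            _ = a := Real.sq_sqrt ha0.le
        have hcos : 1 - a/2 ≤ Real.cos ((inner ℝ x η : ℝ) - θ) :=
          le_trans (by linarith) (Real.one_sub_sq_div_two_le_cos)
        exact mul_le_mul_of_nonneg_right hcos (hψ0 η)
      · have : ψ η = 0 := Set.indicator_of_notMem h g
        rw [this]; simp
    have hint1 : Integrable (fun η => Real.cos ((inner ℝ x η : ℝ) - θ) * ψ η) := by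
      have h := hGint.re
      simp only [RCLike.re_to_complex] at h
      simpa only [hre] using h
    have hmain : (1 - a/2) * M ≤ ∫ η, Real.cos ((inner ℝ x η : ℝ) - θ) * ψ η := by
      rw [hMdef, ← integral_const_mul]
      exact integral_mono (hψint.const_mul _) hint1 hcosge
    have heq2 : ∫ η, Real.cos ((inner ℝ x η : ℝ) - θ) * ψ η = (u * Φ x).re := by
      have h3 := integral_re hGint
      simp only [RCLike.re_to_complex] at h3
      rw [hΦdef, ← integral_const_mul u, ← h3]
      apply integral_congr_ae
      exact Filter.Eventually.of_forall fun η => (hre η).symm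
    have hfinal : (u * Φ x).re ≤ ‖Φ x‖ := by
      calc (u * Φ x).re ≤ ‖u * Φ x‖ := Complex.re_le_norm _
        _ = ‖u * Φ x‖ := rfl
        _ = ‖u‖ * ‖Φ x‖ := norm_mul _ _
        _ = ‖Φ x‖ := by rw [hu, one_mul]
    linarith [hmain, heq2 ▸ hmain]
  -- potential energy
  set W : EuclideanSpace ℝ (Fin d) → ℝ := fun x => ‖((C : ℝ) : ℂ) * Φ x‖^2 with hWdef
  have hWeq : ∀ x, W x = C^2 * ‖Φ x‖^2 := by
    intro x
    show ‖((C : ℝ) : ℂ) * Φ x‖^2 = C^2 * ‖Φ x‖^2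
    rw [norm_mul, mul_pow, Complex.norm_real, Real.norm_eq_abs, abs_of_pos hC0]
  have hWcont : Continuous W := ((continuous_const.mul hΦcont).norm).pow 2
  have hW0 : ∀ x, 0 ≤ W x := fun x => pow_nonneg (norm_nonneg _) 2
  set c2 : ℝ := C^2 * M^2 with hc2def
  have hc2pos : 0 < c2 := by positivity
  have hWle : ∀ x, W x ≤ c2 := by
    intro x
    rw [hWeq, hc2def]
    have h1 : ‖Φ x‖^2 ≤ M^2 := pow_le_pow_left₀ (norm_nonneg _) (hΦle x) 2
    nlinarith [sq_nonneg C]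
  have hWlow : ∀ x : EuclideanSpace ℝ (Fin d), ‖x‖ ≤ R → c2 * (1 - a) ≤ W x := by
    intro x hx
    rw [hWeq, hc2def]
    have h1 := hΦlow x hx
    have h2 : 0 ≤ (1 - a/2) * M := by nlinarith
    have h3 : ((1 - a/2) * M)^2 ≤ ‖Φ x‖^2 := pow_le_pow_left₀ h2 h1 2
    nlinarith [sq_nonneg M, hC0, sq_nonneg (a*M)]
  have hVWint : Integrable (fun x => V x * W x) :=
    Integrable.mono' (hV.abs.mul_const c2) (hV.1.mul hWcont.aestronglyMeasurable)
      (Filter.Eventually.of_forall fun x => by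
        rw [Real.norm_eq_abs, abs_mul, abs_of_nonneg (hW0 x)]
        exact mul_le_mul_of_nonneg_left (hWle x) (abs_nonneg _))
  have hUint : Integrable (fun x => |V x| * (c2 - W x)) :=
    Integrable.mono' (hV.abs.mul_const c2)
      (hV.abs.1.mul (continuous_const.sub hWcont).aestronglyMeasurable)
      (Filter.Eventually.of_forall fun x => by
        rw [Real.norm_eq_abs, abs_mul, abs_abs, abs_of_nonneg (sub_nonneg.2 (hWle x))]
        exact mul_le_mul_of_nonneg_left (by linarith [hW0 x]) (abs_nonneg _))
  have htail2 : ∫ x in (Metric.ball (0:EuclideanSpace ℝ (Fin d)) R)ᶜ, |V x| * (c2 - W x)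
      ≤ c2 * (I/4) := by
    calc ∫ x in (Metric.ball (0:EuclideanSpace ℝ (Fin d)) R)ᶜ, |V x| * (c2 - W x)
        ≤ ∫ x in (Metric.ball (0:EuclideanSpace ℝ (Fin d)) R)ᶜ, |V x| * c2 :=
          setIntegral_mono_on hUint.integrableOn ((hV.abs.mul_const c2).integrableOn)
            measurableSet_ball.compl
            (fun x _ => mul_le_mul_of_nonneg_left (by linarith [hW0 x]) (abs_nonneg _))
      _ = (∫ x in (Metric.ball (0:EuclideanSpace ℝ (Fin d)) R)ᶜ, |V x|) * c2 :=
          integral_mul_const _ _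
      _ ≤ (I/4) * c2 := mul_le_mul_of_nonneg_right hRtail hc2pos.le
      _ = c2 * (I/4) := mul_comm _ _
  have hball2 : ∫ x in Metric.ball (0:EuclideanSpace ℝ (Fin d)) R, |V x| * (c2 - W x)
      ≤ c2 * (I/4) := by
    calc ∫ x in Metric.ball (0:EuclideanSpace ℝ (Fin d)) R, |V x| * (c2 - W x)
        ≤ ∫ x in Metric.ball (0:EuclideanSpace ℝ (Fin d)) R, |V x| * (c2 * a) := by
          refine setIntegral_mono_on hUint.integrableOn
            ((hV.abs.mul_const _).integrableOn) measurableSet_ball (fun x hx => ?_)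
          have hxR : ‖x‖ ≤ R := (mem_ball_zero_iff.1 hx).le
          have h1 := hWlow x hxR
          have h2 : c2 - W x ≤ c2 * a := by nlinarith
          exact mul_le_mul_of_nonneg_left h2 (abs_nonneg _)
      _ = (∫ x in Metric.ball (0:EuclideanSpace ℝ (Fin d)) R, |V x|) * (c2 * a) :=
          integral_mul_const _ _
      _ ≤ nV * (c2 * a) := by
          refine mul_le_mul_of_nonneg_right ?_ (by positivity)
          exact setIntegral_le_integral hV.abs (Filter.Eventually.of_forall fun x => abs_nonneg _)
      _ ≤ c2 * (I/4) := by nlinarith [haV, hc2pos.le]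
  have hUsum : ∫ x, |V x| * (c2 - W x) ≤ c2 * (I/2) := by
    rw [← integral_add_compl (measurableSet_ball (x := (0:EuclideanSpace ℝ (Fin d))) (ε := R))
      hUint]
    linarith [hball2, htail2]
  have hpt : ∀ x, V x * W x ≤ V x * c2 + |V x| * (c2 - W x) := by
    intro x
    have h1 : (-(V x)) * (c2 - W x) ≤ |V x| * (c2 - W x) :=
      mul_le_mul_of_nonneg_right (neg_le_abs _) (by linarith [hWle x])
    nlinarith [h1]
  have hVWle : ∫ x, V x * W x ≤ -(c2 * (I/2)) := by
    have h2 : ∫ x, V x * W x ≤ ∫ x, (V x * c2 + |V x| * (c2 - W x)) :=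
      integral_mono hVWint ((hV.mul_const c2).add hUint) hpt
    rw [integral_add (hV.mul_const c2) hUint, integral_mul_const] at h2
    have h3 : (∫ x, V x) = -I := by rw [hIdef]; ring
    rw [h3] at h2
    nlinarith [hUsum, hc2pos.le, hI]
  -- conclusion
  have hC2I : (0:ℝ) < C^2 * I := by positivity
  have h5 : 4 ≤ M * (C^2 * I) := by
    have h6 : 4/(C^2*I) ≤ M := by rw [hKdef] at hKM; linarith
    exact (div_le_iff₀ hC2I).1 h6
  refine ⟨ψ, hψmeas, hψ0, hψint, hψsqint, ?_, hTψint, ?_, ?_⟩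
  · intro h0
    have : M = 0 := by rw [hMdef, h0]; simp
    linarith
  · exact hVWint
  · show (∫ η, T η * ψ η ^ 2) + (∫ x, V x * W x) < 0
    have hlt : M - c2 * (I/2) < 0 := by nlinarith [hM0, hc2pos]
    linarith [hTψle, hVWle]
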